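/- Let n ≥ 1 be an integer and let m_1, …, m_n be nonnegative integers with Σ_{j=1}^n j·m_j = n. Set k = Σ_{j=1}^n m_j and s = 2k - m_1. Then (k!)^2/(m_1!·n!) · Π_{j=2}^n (j!/2)^{m_j} ≤ (s/n)^{(s-2)/2} · Π_{j=2}^n (j/n)^{(j-2)m_j/2}. -/

import Mathlib

open Finset Real


-- factorial convexity : (a+d)!^2 ≤ a! (a+2d)!
lemma convex_fac (a d : ℕ) :
    Nat.factorial (a+d) * Nat.factorial (a+d) ≤ Nat.factorial a * Nat.factorial (a+2*d) := by
  induction d with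
  | zero => simp
  | succ d ih =>
      have h1 : (a+d+1) * (a+d+1) ≤ (a+2*d+1) * (a+2*d+2) :=
        Nat.mul_le_mul (by omega) (by omega)
      have e1 : a + (d+1) = (a+d) + 1 := by ring
      have e2 : a + 2*(d+1) = (a+2*d+1) + 1 := by ring
      rw [e1, e2, Nat.factorial_succ, Nat.factorial_succ]
      have e3 : a + 2*d + 1 = (a + 2*d) + 1 := by ring
      rw [e3, Nat.factorial_succ]
      calc ((a+d)+1) * Nat.factorial (a+d) * (((a+d)+1) * Nat.factorial (a+d))
          = ((a+d+1) * (a+d+1)) * (Nat.factorial (a+d) * Nat.factorial (a+d)) := by ring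
        _ ≤ ((a+2*d+1) * (a+2*d+2)) * (Nat.factorial a * Nat.factorial (a+2*d)) :=
            Nat.mul_le_mul h1 ih
        _ = Nat.factorial a * ((a+2*d+1+1) * ((a+2*d+1) * Nat.factorial (a+2*d))) := by ring

-- (a+q)! (b+q)! c! c! ≤ a! b! (c+q)! (c+q)!  when a + b = 2c
lemma abk (a b c : ℕ) (h : a + b = 2*c) (q : ℕ) :
    Nat.factorial (a+q) * Nat.factorial (b+q) * (Nat.factorial c * Nat.factorial c) ≤
    Nat.factorial a * Nat.factorial b * (Nat.factorial (c+q) * Nat.factorial (c+q)) := by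
  induction q with
  | zero => simp [Nat.mul_comm, Nat.mul_left_comm, Nat.mul_assoc, Nat.le_refl]
  | succ q ih =>
      have key : (a+q+1) * (b+q+1) ≤ (c+q+1) * (c+q+1) := by nlinarith [sq_nonneg ((a:ℤ) - b), h]
      have e1 : a + (q+1) = (a+q) + 1 := by ring
      have e2 : b + (q+1) = (b+q) + 1 := by ring
      have e3 : c + (q+1) = (c+q) + 1 := by ring
      rw [e1, e2, e3, Nat.factorial_succ, Nat.factorial_succ, Nat.factorial_succ]
      calc (a+q+1) * Nat.factorial (a+q) * ((b+q+1) * Nat.factorial (b+q)) *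
             (Nat.factorial c * Nat.factorial c)
          = ((a+q+1)*(b+q+1)) * (Nat.factorial (a+q) * Nat.factorial (b+q) *
              (Nat.factorial c * Nat.factorial c)) := by ring
        _ ≤ ((c+q+1)*(c+q+1)) * (Nat.factorial a * Nat.factorial b *
              (Nat.factorial (c+q) * Nat.factorial (c+q))) := Nat.mul_le_mul key ih
        _ = Nat.factorial a * Nat.factorial b *
              ((c+q+1) * Nat.factorial (c+q) * ((c+q+1) * Nat.factorial (c+q))) := by ring


lemma lemG1 (y : ℝ) (hy : 2 ≤ y) :
    (y+2) ^ ((y-2)/2) * y ^ ((y-2)/2) ≤ (y+1) ^ ((y-3)/2) * (y+1) ^ ((y-1)/2) := by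
  have hy1 : (0:ℝ) < y + 1 := by linarith
  have h1 : (y+2) ^ ((y-2)/2) * y ^ ((y-2)/2) = ((y+2)*y) ^ ((y-2)/2) :=
    (Real.mul_rpow (by linarith) (by linarith)).symm
  have h2 : (y+1) ^ ((y-3)/2) * (y+1) ^ ((y-1)/2) = (y+1) ^ (y-2) := by
    rw [← Real.rpow_add hy1]; ring_nf
  have h3 : ((y+1)*(y+1)) ^ ((y-2)/2) = (y+1) ^ (y-2) := by
    rw [show (y+1)*(y+1) = (y+1) ^ ((2:ℕ):ℝ) by rw [Real.rpow_natCast]; ring,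
        ← Real.rpow_mul (by linarith),
        show ((2:ℕ):ℝ) * ((y-2)/2) = y - 2 by push_cast; ring]
  rw [h1, h2, ← h3]
  apply Real.rpow_le_rpow (by nlinarith) (by nlinarith) (by linarith)

lemma lemG (x : ℝ) (hx : 2 ≤ x) : ∀ (q : ℕ) (y : ℝ), y = x + q →
    (y+1) ^ ((y-3)/2) * x ^ ((x-2)/2) ≤ (x+1) ^ ((x-3)/2) * y ^ ((y-2)/2) := by
  intro q
  induction q with
  | zero => intro y hy; push_cast at hy; simp [hy]
  | succ q ih =>
      intro y hy
      have hy' : y = (x + (q:ℝ)) + 1 := by push_cast at hy ⊢; linarith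
      subst hy'
      set z : ℝ := x + (q:ℝ) with hzdef
      have hz2 : 2 ≤ z := by
        have : (0:ℝ) ≤ (q:ℝ) := Nat.cast_nonneg q
        rw [hzdef]; linarith
      have ihz := ih z hzdef
      have hg1 := lemG1 z hz2
      rw [show z+1+1 = z+2 by ring, show (z+1-3)/2 = (z-2)/2 by ring,
          show (z+1-2)/2 = (z-1)/2 by ring]
      have hposA : (0:ℝ) < (z+1) ^ ((z-3)/2) := Real.rpow_pos_of_pos (by linarith) _
      have hxp : (0:ℝ) ≤ (z+2) ^ ((z-2)/2) := le_of_lt (Real.rpow_pos_of_pos (by linarith) _)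
      have hx1p : (0:ℝ) ≤ (x+1) ^ ((x-3)/2) := le_of_lt (Real.rpow_pos_of_pos (by linarith) _)
      apply le_of_mul_le_mul_left _ hposA
      calc (z+1) ^ ((z-3)/2) * ((z+2) ^ ((z-2)/2) * x ^ ((x-2)/2))
          = (z+2) ^ ((z-2)/2) * ((z+1) ^ ((z-3)/2) * x ^ ((x-2)/2)) := by ring
        _ ≤ (z+2) ^ ((z-2)/2) * ((x+1) ^ ((x-3)/2) * z ^ ((z-2)/2)) :=
            mul_le_mul_of_nonneg_left ihz hxp
        _ = (x+1) ^ ((x-3)/2) * ((z+2) ^ ((z-2)/2) * z ^ ((z-2)/2)) := by ring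
        _ ≤ (x+1) ^ ((x-3)/2) * ((z+1) ^ ((z-3)/2) * (z+1) ^ ((z-1)/2)) :=
            mul_le_mul_of_nonneg_left hg1 hx1p
        _ = (z+1) ^ ((z-3)/2) * ((x+1) ^ ((x-3)/2) * (z+1) ^ ((z-1)/2)) := by ring

lemma lemCR (x : ℝ) (hx : 2 ≤ x) (q : ℕ) :
    (x+1) * (x+q+1) ^ ((x+q-1)/2) * x ^ ((x-2)/2) ≤
    (x+q+1) * (x+1) ^ ((x-1)/2) * (x+q) ^ ((x+q-2)/2) := by
  have hq0 : (0:ℝ) ≤ q := Nat.cast_nonneg q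
  have h1 : (x+q+1) ^ ((x+q-1)/2) = (x+q+1) ^ ((x+q-3)/2) * (x+q+1) := by
    rw [← Real.rpow_add_one (by positivity)]; ring_nf
  have h2 : (x+1) ^ ((x-1)/2) = (x+1) ^ ((x-3)/2) * (x+1) := by
    rw [← Real.rpow_add_one (by positivity)]; ring_nf
  rw [h1, h2]
  have hg := lemG x hx q (x+q) rfl
  calc (x+1) * ((x+q+1) ^ ((x+q-3)/2) * (x+q+1)) * x ^ ((x-2)/2)
      = ((x+1)*(x+q+1)) * ((x+q+1) ^ ((x+q-3)/2) * x ^ ((x-2)/2)) := by ring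
    _ ≤ ((x+1)*(x+q+1)) * ((x+1) ^ ((x-3)/2) * (x+q) ^ ((x+q-2)/2)) :=
        mul_le_mul_of_nonneg_left hg (by nlinarith)
    _ = (x+q+1) * ((x+1) ^ ((x-3)/2) * (x+1)) * (x+q) ^ ((x+q-2)/2) := by ring


lemma lemBbase (q : ℕ) :
    (Nat.factorial 2 : ℝ) * ((Nat.factorial (q+2) : ℝ)/2) * ((2+q : ℕ) : ℝ) ^ ((((2:ℕ):ℝ)+q-2)/2) ≤
    (Nat.factorial (2+q) : ℝ) * ((2:ℕ):ℝ) ^ ((((2:ℕ):ℝ)-2)/2) * ((q+2 : ℕ) : ℝ) ^ ((q:ℝ)/2) := by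
  rw [show (2+q : ℕ) = q+2 by ring]
  rw [Nat.factorial_two]
  rw [show ((((2:ℕ):ℝ))+q-2)/2 = (q:ℝ)/2 by push_cast; ring]
  rw [show ((((2:ℕ):ℝ))-2)/2 = (0:ℝ) by push_cast; ring]
  rw [Real.rpow_zero]
  push_cast
  ring_nf
  exact le_refl _

lemma lemB (q s : ℕ) (hs : 2 ≤ s) :
    (Nat.factorial s : ℝ) * ((Nat.factorial (q+2) : ℝ)/2) * ((s+q : ℕ) : ℝ) ^ (((s:ℝ)+q-2)/2) ≤
    (Nat.factorial (s+q) : ℝ) * (s:ℝ) ^ (((s:ℝ)-2)/2) * ((q+2 : ℕ) : ℝ) ^ ((q:ℝ)/2) := by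
  induction s, hs using Nat.le_induction with
  | base => exact lemBbase q
  | succ s hs ih =>
      have hs0 : (0:ℝ) < s := by positivity
      have hs2 : (2:ℝ) ≤ (s:ℝ) := by exact_mod_cast hs
      have hcr := lemCR (s:ℝ) hs2 q
      set X : ℝ := (s:ℝ) with hX
      set C : ℝ := (Nat.factorial (q+2) : ℝ)/2 with hC
      set D : ℝ := ((q+2 : ℕ) : ℝ) ^ ((q:ℝ)/2) with hD
      have hsq : ((s+q : ℕ) : ℝ) = X + q := by push_cast [hX]; ring
      have hw : (0:ℝ) < (X+(q:ℝ)) ^ ((X+q-2)/2) * X ^ ((X-2)/2) := by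
        have h1 : (0:ℝ) < X + (q:ℝ) := by positivity
        positivity
      apply le_of_mul_le_mul_right _ hw
      have hfa : (Nat.factorial (s+1) : ℝ) = (X+1) * (Nat.factorial s : ℝ) := by
        rw [Nat.factorial_succ]; push_cast [hX]; ring
      have hfb : (Nat.factorial (s+1+q) : ℝ) = (X+q+1) * (Nat.factorial (s+q) : ℝ) := by
        rw [show s+1+q = (s+q)+1 by ring, Nat.factorial_succ]; push_cast [hX]; ring
      have hca : ((s+1+q : ℕ) : ℝ) = X + q + 1 := by push_cast [hX]; ring
      have hcb : ((s+1 : ℕ) : ℝ) = X + 1 := by push_cast [hX]; ring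
      rw [hsq] at ih
      have ih' := ih
      rw [hfa, hfb, hca, hcb]
      rw [show ((X+1)+(q:ℝ)-2)/2 = (X+q-1)/2 by ring, show ((X+1)-2)/2 = (X-1)/2 by ring]
      have hL : (0:ℝ) ≤ (Nat.factorial s : ℝ) * C * (X+(q:ℝ)) ^ ((X+q-2)/2) := by positivity
      have hM : (0:ℝ) ≤ (X+q+1) * (X+1) ^ ((X-1)/2) * (X+q) ^ ((X+q-2)/2) := by positivity
      calc (X+1) * (Nat.factorial s : ℝ) * C * (X+q+1) ^ ((X+q-1)/2) *
              ((X+(q:ℝ)) ^ ((X+q-2)/2) * X ^ ((X-2)/2))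
          = ((Nat.factorial s : ℝ) * C * (X+(q:ℝ)) ^ ((X+q-2)/2)) *
              ((X+1) * (X+q+1) ^ ((X+q-1)/2) * X ^ ((X-2)/2)) := by ring
        _ ≤ ((Nat.factorial s : ℝ) * C * (X+(q:ℝ)) ^ ((X+q-2)/2)) *
              ((X+q+1) * (X+1) ^ ((X-1)/2) * (X+q) ^ ((X+q-2)/2)) :=
            mul_le_mul_of_nonneg_left hcr hL
        _ = ((Nat.factorial s : ℝ) * C * (X+(q:ℝ)) ^ ((X+q-2)/2)) *
              ((X+q+1) * (X+1) ^ ((X-1)/2) * (X+(q:ℝ)) ^ ((X+q-2)/2)) := by ring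
        _ ≤ ((Nat.factorial (s+q) : ℝ) * X ^ ((X-2)/2) * D) *
              ((X+q+1) * (X+1) ^ ((X-1)/2) * (X+(q:ℝ)) ^ ((X+q-2)/2)) :=
            mul_le_mul_of_nonneg_right ih' (by positivity)
        _ = (X+q+1) * (Nat.factorial (s+q) : ℝ) * (X+1) ^ ((X-1)/2) * D *
              ((X+(q:ℝ)) ^ ((X+q-2)/2) * X ^ ((X-2)/2)) := by ring


lemma step3core (m1 s k q : ℕ) (h : m1 + s = 2*k) (hs : 2 ≤ s) :
    (Nat.factorial k : ℝ)^2 * ((Nat.factorial (q+2) : ℝ)/2) * (Nat.factorial (m1+q) : ℝ) *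
        ((s+q : ℕ) : ℝ) ^ (((s:ℝ)+q-2)/2) ≤
    (Nat.factorial (k+q) : ℝ)^2 * ((s:ℝ)) ^ (((s:ℝ)-2)/2) * ((q+2 : ℕ) : ℝ) ^ ((q:ℝ)/2) *
        (Nat.factorial m1 : ℝ) := by
  have hB := lemB q s hs
  have hab : ((Nat.factorial (m1+q) : ℝ) * (Nat.factorial (s+q)) * (Nat.factorial k * Nat.factorial k)) ≤
      ((Nat.factorial m1 : ℝ) * Nat.factorial s * (Nat.factorial (k+q) * Nat.factorial (k+q))) := by
    exact_mod_cast abk m1 s k h q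
  have hsf : (0:ℝ) < (Nat.factorial s : ℝ) := by positivity
  apply le_of_mul_le_mul_right _ hsf
  have h1 : (0:ℝ) ≤ (Nat.factorial k : ℝ)^2 * (Nat.factorial (m1+q) : ℝ) := by positivity
  have h2 : (0:ℝ) ≤ (s:ℝ) ^ (((s:ℝ)-2)/2) * ((q+2 : ℕ) : ℝ) ^ ((q:ℝ)/2) := by positivity
  calc (Nat.factorial k : ℝ)^2 * ((Nat.factorial (q+2) : ℝ)/2) * (Nat.factorial (m1+q) : ℝ) *
          ((s+q : ℕ) : ℝ) ^ (((s:ℝ)+q-2)/2) * (Nat.factorial s : ℝ)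
      = ((Nat.factorial k : ℝ)^2 * (Nat.factorial (m1+q) : ℝ)) *
          ((Nat.factorial s : ℝ) * ((Nat.factorial (q+2) : ℝ)/2) * ((s+q : ℕ) : ℝ) ^ (((s:ℝ)+q-2)/2)) := by
        ring
    _ ≤ ((Nat.factorial k : ℝ)^2 * (Nat.factorial (m1+q) : ℝ)) *
          ((Nat.factorial (s+q) : ℝ) * (s:ℝ) ^ (((s:ℝ)-2)/2) * ((q+2 : ℕ) : ℝ) ^ ((q:ℝ)/2)) :=
        mul_le_mul_of_nonneg_left hB h1
    _ = ((Nat.factorial (m1+q) : ℝ) * (Nat.factorial (s+q)) * (Nat.factorial k * Nat.factorial k)) *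
          ((s:ℝ) ^ (((s:ℝ)-2)/2) * ((q+2 : ℕ) : ℝ) ^ ((q:ℝ)/2)) := by ring
    _ ≤ ((Nat.factorial m1 : ℝ) * Nat.factorial s * (Nat.factorial (k+q) * Nat.factorial (k+q))) *
          ((s:ℝ) ^ (((s:ℝ)-2)/2) * ((q+2 : ℕ) : ℝ) ^ ((q:ℝ)/2)) :=
        mul_le_mul_of_nonneg_right hab h2
    _ = (Nat.factorial (k+q) : ℝ)^2 * ((s:ℝ)) ^ (((s:ℝ)-2)/2) * ((q+2 : ℕ) : ℝ) ^ ((q:ℝ)/2) *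
          (Nat.factorial m1 : ℝ) * (Nat.factorial s : ℝ) := by ring


lemma keylem (n m1 s k q : ℕ) (hn : 1 ≤ n) (h : m1 + s = 2*k) (hs : 2 ≤ s) :
    (Nat.factorial k : ℝ)^2 * ((Nat.factorial (q+2) : ℝ)/2) *
      ((((s+q:ℕ):ℝ))/n) ^ ((((s+q:ℕ):ℝ)-2)/2) * (Nat.factorial (m1+q) : ℝ) ≤
    (Nat.factorial (k+q) : ℝ)^2 *
      (((s:ℝ)/n) ^ (((s:ℝ)-2)/2) * (((q+2:ℕ):ℝ)/n) ^ ((((q+2:ℕ):ℝ)-2)/2)) *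
      (Nat.factorial m1 : ℝ) := by
  have hn0 : (0:ℝ) < n := by positivity
  set E : ℝ := ((s:ℝ)+q-2)/2 with hE
  set e : ℝ := ((s:ℝ)-2)/2 with he
  have h1 : ((((s+q:ℕ):ℝ))/n) ^ ((((s+q:ℕ):ℝ)-2)/2) = ((s+q:ℕ):ℝ)^E / (n:ℝ)^E := by
    rw [show (((s+q:ℕ):ℝ)-2)/2 = E by push_cast [hE]; ring]
    exact Real.div_rpow (by positivity) (le_of_lt hn0) E
  have h3 : (((q+2:ℕ):ℝ)/n) ^ ((((q+2:ℕ):ℝ)-2)/2) = ((q+2:ℕ):ℝ)^((q:ℝ)/2) / (n:ℝ)^((q:ℝ)/2) := by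
    rw [show (((q+2:ℕ):ℝ)-2)/2 = (q:ℝ)/2 by push_cast; ring]
    exact Real.div_rpow (by positivity) (le_of_lt hn0) _
  have h2 : ((s:ℝ)/n) ^ e = (s:ℝ)^e / (n:ℝ)^e := Real.div_rpow (by positivity) (le_of_lt hn0) e
  have h4 : (n:ℝ)^e * (n:ℝ)^((q:ℝ)/2) = (n:ℝ)^E := by
    rw [← Real.rpow_add hn0]; rw [hE, he]; ring_nf
  rw [h1, h2, h3]
  rw [div_mul_div_comm, h4]
  rw [show (Nat.factorial k : ℝ)^2 * ((Nat.factorial (q+2) : ℝ)/2) *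
        (((s+q:ℕ):ℝ)^E / (n:ℝ)^E) * (Nat.factorial (m1+q) : ℝ) =
      ((Nat.factorial k : ℝ)^2 * ((Nat.factorial (q+2) : ℝ)/2) * (Nat.factorial (m1+q) : ℝ) *
        ((s+q:ℕ):ℝ)^E) / (n:ℝ)^E by ring]
  rw [show (Nat.factorial (k+q) : ℝ)^2 * ((s:ℝ)^e * ((q+2:ℕ):ℝ)^((q:ℝ)/2) / (n:ℝ)^E) *
        (Nat.factorial m1 : ℝ) =
      ((Nat.factorial (k+q) : ℝ)^2 * (s:ℝ)^e * ((q+2:ℕ):ℝ)^((q:ℝ)/2) *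
        (Nat.factorial m1 : ℝ)) / (n:ℝ)^E by ring]
  have hd : (0:ℝ) < (n:ℝ)^E := Real.rpow_pos_of_pos hn0 E
  rw [div_le_div_iff₀ hd hd]
  have hcore := step3core m1 s k q h hs
  calc (Nat.factorial k : ℝ)^2 * ((Nat.factorial (q+2) : ℝ)/2) * (Nat.factorial (m1+q) : ℝ) *
        ((s+q:ℕ):ℝ)^E * (n:ℝ)^E
      ≤ ((Nat.factorial (k+q) : ℝ)^2 * ((s:ℝ)) ^ e * ((q+2 : ℕ) : ℝ) ^ ((q:ℝ)/2) *
        (Nat.factorial m1 : ℝ)) * (n:ℝ)^E := by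
        exact mul_le_mul_of_nonneg_right hcore (le_of_lt hd)
    _ = (Nat.factorial (k+q) : ℝ)^2 * (s:ℝ)^e * ((q+2:ℕ):ℝ)^((q:ℝ)/2) *
        (Nat.factorial m1 : ℝ) * (n:ℝ)^E := by ring


lemma mainlem (n : ℕ) (hn : 1 ≤ n) (t : ℕ) : ∀ (m : ℕ → ℕ) (k s : ℕ),
    (∑ j ∈ Icc 1 n, j * m j = n) → (k = ∑ j ∈ Icc 1 n, m j) → (s = 2*k - m 1) →
    (∑ j ∈ Icc 3 n, m j = t) →
    (Nat.factorial k : ℝ)^2 * (∏ j ∈ Icc 2 n, ((Nat.factorial j : ℝ)/2)^(m j)) ≤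
      ((s:ℝ)/n) ^ (((s:ℝ)-2)/2) *
      (∏ j ∈ Icc 2 n, ((j:ℝ)/n) ^ ((((j:ℝ)-2) * (m j : ℝ))/2)) *
      ((Nat.factorial (m 1) : ℝ) * (Nat.factorial n : ℝ)) := by
  induction t with
  | zero =>
      intro m k s hsum hk hs ht
      have h3 : ∀ j ∈ Icc 3 n, m j = 0 := by
        intro j hj
        exact Nat.eq_zero_of_le_zero (le_trans (Finset.single_le_sum
          (fun i _ => Nat.zero_le (m i)) hj) (le_of_eq ht))
      have hP : (∏ j ∈ Icc 2 n, ((Nat.factorial j : ℝ)/2)^(m j)) = 1 := by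
        apply Finset.prod_eq_one
        intro j hj
        rcases eq_or_ne j 2 with h2 | h2
        · subst h2; norm_num [Nat.factorial_two]
        · have : j ∈ Icc 3 n := by
            have := Finset.mem_Icc.mp hj; rw [Finset.mem_Icc]; omega
          rw [h3 j this, pow_zero]
      have hQ : (∏ j ∈ Icc 2 n, ((j:ℝ)/n) ^ ((((j:ℝ)-2) * (m j : ℝ))/2)) = 1 := by
        apply Finset.prod_eq_one
        intro j hj
        rcases eq_or_ne j 2 with h2 | h2
        · subst h2; norm_num
        · have hj3 : j ∈ Icc 3 n := by
            have := Finset.mem_Icc.mp hj; rw [Finset.mem_Icc]; omega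
          rw [h3 j hj3]
          norm_num
      rw [hP, hQ]
      -- establish s = n, m 1 ≤ k, n = m 1 + 2*(k - m 1)
      have harith : s = n ∧ m 1 ≤ k ∧ n = m 1 + 2*(k - m 1) := by
        rcases eq_or_ne n 1 with h1 | h1
        · subst h1
          simp only [Finset.Icc_self, Finset.sum_singleton, one_mul] at hsum hk
          omega
        · have hn2 : 2 ≤ n := by omega
          have hsplit : Icc 1 n = insert 1 (insert 2 (Icc 3 n)) := by
            ext x; simp only [Finset.mem_Icc, Finset.mem_insert]; omega
          have h1n : (1:ℕ) ∉ insert 2 (Icc 3 n) := by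
            simp [Finset.mem_Icc]
          have h2n : (2:ℕ) ∉ Icc 3 n := by simp [Finset.mem_Icc]
          rw [hsplit, Finset.sum_insert h1n, Finset.sum_insert h2n] at hsum hk
          have hz : ∑ j ∈ Icc 3 n, j * m j = 0 :=
            Finset.sum_eq_zero (fun j hj => by rw [h3 j hj, mul_zero])
          omega
      obtain ⟨hsn, hm1k, hnm⟩ := harith
      rw [hsn]
      have hnn : ((n:ℝ)/n) = 1 := by
        have : (n:ℝ) ≠ 0 := by positivity
        field_simp
      rw [hnn, Real.one_rpow]
      have hfac := convex_fac (m 1) (k - m 1)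
      rw [show m 1 + (k - m 1) = k by omega, ← hnm] at hfac
      have : ((Nat.factorial k : ℝ)) * (Nat.factorial k : ℝ) ≤
          (Nat.factorial (m 1) : ℝ) * (Nat.factorial n : ℝ) := by exact_mod_cast hfac
      nlinarith [this]
  | succ t IH =>
      intro m k s hsum hk hs ht
      have hne : ∑ j ∈ Icc 3 n, m j ≠ 0 := by omega
      obtain ⟨j₀, hj₀mem, hmj₀⟩ := Finset.exists_ne_zero_of_sum_ne_zero hne
      have hj₀r : 3 ≤ j₀ ∧ j₀ ≤ n := Finset.mem_Icc.mp hj₀mem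
      obtain ⟨q, hq1, rfl⟩ : ∃ q, 1 ≤ q ∧ j₀ = q + 2 := ⟨j₀ - 2, by omega, by omega⟩
      have hn3 : 3 ≤ n := by omega
      set j₀ := q + 2 with hj₀
      have hmj₀1 : 1 ≤ m j₀ := by omega
      set m' : ℕ → ℕ := fun j => if j = 1 then m 1 + q else if j = 2 then m 2 + 1
        else if j = j₀ then m j₀ - 1 else m j with hm'
      have hm'1 : m' 1 = m 1 + q := by simp [hm']
      have hm'2 : m' 2 = m 2 + 1 := by
        simp only [hm']
        rw [if_neg (by omega)]
        simp
      have hm'j₀ : m' j₀ = m j₀ - 1 := by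
        simp only [hm']
        rw [if_neg (by omega), if_neg (by omega)]
        simp
      have hm'rest : ∀ x ∈ (Icc 3 n).erase j₀, m' x = m x := by
        intro x hx
        obtain ⟨hxne, hxm⟩ := Finset.mem_erase.mp hx
        have hxr := Finset.mem_Icc.mp hxm
        simp only [hm']
        rw [if_neg (by omega), if_neg (by omega), if_neg hxne]
      -- set splits
      have hsplit1 : Icc 1 n = insert 1 (insert 2 (Icc 3 n)) := by
        ext x; simp only [Finset.mem_Icc, Finset.mem_insert]; omega
      have h1n : (1:ℕ) ∉ insert 2 (Icc 3 n) := by simp [Finset.mem_Icc]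
      have h2n : (2:ℕ) ∉ Icc 3 n := by simp [Finset.mem_Icc]
      have hsplit3 : Icc 3 n = insert j₀ ((Icc 3 n).erase j₀) := (Finset.insert_erase hj₀mem).symm
      have hj₀e : j₀ ∉ (Icc 3 n).erase j₀ := Finset.notMem_erase _ _
      have hsplit2 : Icc 2 n = insert 2 (Icc 3 n) := by
        ext x; simp only [Finset.mem_Icc, Finset.mem_insert]; omega
      obtain ⟨a, ha⟩ : ∃ a, m j₀ = a + 1 := ⟨m j₀ - 1, by omega⟩
      have hm'j₀a : m' j₀ = a := by rw [hm'j₀, ha]; omega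
      -- expanded old sums
      rw [hsplit1, Finset.sum_insert h1n, Finset.sum_insert h2n] at hsum hk
      rw [hsplit3, Finset.sum_insert hj₀e] at hsum hk ht
      -- new sums
      have hrest1 : ∑ j ∈ (Icc 3 n).erase j₀, j * m' j = ∑ j ∈ (Icc 3 n).erase j₀, j * m j :=
        Finset.sum_congr rfl (fun x hx => by rw [hm'rest x hx])
      have hrest0 : ∑ j ∈ (Icc 3 n).erase j₀, m' j = ∑ j ∈ (Icc 3 n).erase j₀, m j :=
        Finset.sum_congr rfl (fun x hx => by rw [hm'rest x hx])
      have hsum' : ∑ j ∈ Icc 1 n, j * m' j = n := by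
        rw [hsplit1, Finset.sum_insert h1n, Finset.sum_insert h2n, hsplit3,
            Finset.sum_insert hj₀e, hrest1, hm'1, hm'2, hm'j₀a]
        rw [ha, hj₀] at hsum
        calc 1 * (m 1 + q) + (2 * (m 2 + 1) + ((q+2) * a + ∑ j ∈ (Icc 3 n).erase j₀, j * m j))
            = 1 * m 1 + (2 * m 2 + ((q+2) * (a + 1) + ∑ j ∈ (Icc 3 n).erase j₀, j * m j)) := by
              ring
          _ = n := hsum
      have hk' : k + q = ∑ j ∈ Icc 1 n, m' j := by
        rw [hsplit1, Finset.sum_insert h1n, Finset.sum_insert h2n, hsplit3,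
            Finset.sum_insert hj₀e, hrest0, hm'1, hm'2, hm'j₀a]
        rw [ha] at hk
        omega
      have hm1k : m 1 ≤ k := by omega
      have hs2 : 2 ≤ s := by rw [ha] at hk; omega
      have hs' : s + q = 2 * (k + q) - m' 1 := by rw [hm'1]; omega
      have ht' : ∑ j ∈ Icc 3 n, m' j = t := by
        rw [hsplit3, Finset.sum_insert hj₀e, hrest0, hm'j₀a]
        rw [ha] at ht
        omega
      have hIH := IH m' (k+q) (s+q) hsum' hk' hs' ht'
      rw [hm'1] at hIH
      -- product identities
      set c₀ : ℝ := ((Nat.factorial j₀ : ℝ))/2 with hc₀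
      set c₁ : ℝ := ((j₀:ℝ)/n) ^ (((j₀:ℝ)-2)/2) with hc₁
      set P' : ℝ := ∏ j ∈ Icc 2 n, ((Nat.factorial j : ℝ)/2)^(m' j) with hP'
      set Q' : ℝ := ∏ j ∈ Icc 2 n, ((j:ℝ)/n) ^ ((((j:ℝ)-2) * (m' j : ℝ))/2) with hQ'
      have hPR : ∏ j ∈ (Icc 3 n).erase j₀, ((Nat.factorial j : ℝ)/2)^(m' j) =
          ∏ j ∈ (Icc 3 n).erase j₀, ((Nat.factorial j : ℝ)/2)^(m j) :=
        Finset.prod_congr rfl (fun x hx => by rw [hm'rest x hx])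
      have hQR : ∏ j ∈ (Icc 3 n).erase j₀, ((j:ℝ)/n) ^ ((((j:ℝ)-2) * (m' j : ℝ))/2) =
          ∏ j ∈ (Icc 3 n).erase j₀, ((j:ℝ)/n) ^ ((((j:ℝ)-2) * (m j : ℝ))/2) :=
        Finset.prod_congr rfl (fun x hx => by rw [hm'rest x hx])
      have hPP : (∏ j ∈ Icc 2 n, ((Nat.factorial j : ℝ)/2)^(m j)) = P' * c₀ := by
        rw [hP', hc₀, hsplit2, Finset.prod_insert h2n, Finset.prod_insert h2n, hsplit3,
            Finset.prod_insert hj₀e, Finset.prod_insert hj₀e, hPR, hm'2, hm'j₀a, ha]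
        rw [show ((Nat.factorial 2 : ℝ))/2 = 1 by norm_num [Nat.factorial_two]]
        rw [pow_succ, one_pow, one_pow]
        ring
      have hj₀npos : (0:ℝ) < (j₀:ℝ)/n := by
        have h1 : (0:ℝ) < (j₀:ℝ) := by positivity
        have h2 : (0:ℝ) < (n:ℝ) := by positivity
        positivity
      have hQQ : (∏ j ∈ Icc 2 n, ((j:ℝ)/n) ^ ((((j:ℝ)-2) * (m j : ℝ))/2)) = Q' * c₁ := by
        rw [hQ', hc₁, hsplit2, Finset.prod_insert h2n, Finset.prod_insert h2n, hsplit3,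
            Finset.prod_insert hj₀e, Finset.prod_insert hj₀e, hQR, hm'2, hm'j₀a, ha]
        have h2t : (((2:ℕ):ℝ)-2) = 0 := by norm_num
        rw [h2t]
        simp only [zero_mul, zero_div, Real.rpow_zero]
        have hj : ((j₀:ℝ)/n) ^ ((((j₀:ℝ)-2) * ((a+1 : ℕ) : ℝ))/2) =
            ((j₀:ℝ)/n) ^ ((((j₀:ℝ)-2) * ((a:ℕ) : ℝ))/2) * ((j₀:ℝ)/n) ^ (((j₀:ℝ)-2)/2) := by
          rw [← Real.rpow_add hj₀npos]
          congr 1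
          push_cast
          ring
        rw [hj]
        ring
      rw [hPP, hQQ]
      -- key inequality
      have hm1s : m 1 + s = 2 * k := by omega
      have hkey := keylem n (m 1) s k q hn hm1s hs2
      have hQ'nonneg : (0:ℝ) ≤ Q' := by
        rw [hQ']
        apply Finset.prod_nonneg
        intro j hj
        apply Real.rpow_nonneg
        positivity
      have hP'nonneg : (0:ℝ) ≤ P' := by
        rw [hP']
        apply Finset.prod_nonneg
        intro j hj
        positivity
      have hc₀pos : (0:ℝ) < c₀ := by rw [hc₀]; positivity
      have hkq : (0:ℝ) < ((Nat.factorial (k+q) : ℝ))^2 := by positivity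
      apply le_of_mul_le_mul_left _ hkq
      calc ((Nat.factorial (k+q) : ℝ))^2 * ((Nat.factorial k : ℝ)^2 * (P' * c₀))
          = ((Nat.factorial k : ℝ)^2 * c₀) * (((Nat.factorial (k+q) : ℝ))^2 * P') := by ring
        _ ≤ ((Nat.factorial k : ℝ)^2 * c₀) *
              ((((s+q:ℕ):ℝ)/n) ^ ((((s+q:ℕ):ℝ)-2)/2) * Q' * ((Nat.factorial (m 1 + q) : ℝ) *
                (Nat.factorial n : ℝ))) := by
            apply mul_le_mul_of_nonneg_left hIH (by positivity)
        _ = ((Nat.factorial k : ℝ)^2 * c₀ * ((((s+q:ℕ):ℝ))/n) ^ ((((s+q:ℕ):ℝ)-2)/2) *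
              (Nat.factorial (m 1 + q) : ℝ)) * (Q' * (Nat.factorial n : ℝ)) := by ring
        _ ≤ (((Nat.factorial (k+q) : ℝ))^2 * (((s:ℝ)/n) ^ (((s:ℝ)-2)/2) * c₁) *
              (Nat.factorial (m 1) : ℝ)) * (Q' * (Nat.factorial n : ℝ)) := by
            apply mul_le_mul_of_nonneg_right _ (by positivity)
            exact hkey
        _ = ((Nat.factorial (k+q) : ℝ))^2 * (((s:ℝ)/n) ^ (((s:ℝ)-2)/2) * (Q' * c₁) *
              ((Nat.factorial (m 1) : ℝ) * (Nat.factorial n : ℝ))) := by ring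




theorem faa_di_bruno_coeff_bound (n : ℕ) (hn : 1 ≤ n) (m : ℕ → ℕ)
    (hsum : ∑ j ∈ Finset.Icc 1 n, j * m j = n)
    (k s : ℕ) (hk : k = ∑ j ∈ Finset.Icc 1 n, m j) (hs : s = 2 * k - m 1) :
    ((Nat.factorial k : ℝ)) ^ 2 / ((Nat.factorial (m 1) : ℝ) * (Nat.factorial n : ℝ)) *
      ∏ j ∈ Finset.Icc 2 n, ((Nat.factorial j : ℝ) / 2) ^ (m j) ≤
    ((s : ℝ) / (n : ℝ)) ^ (((s : ℝ) - 2) / 2) *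
      ∏ j ∈ Finset.Icc 2 n, ((j : ℝ) / (n : ℝ)) ^ ((((j : ℝ) - 2) * (m j : ℝ)) / 2) := by
  have h := mainlem n hn (∑ j ∈ Finset.Icc 3 n, m j) m k s hsum hk hs rfl
  have hpos : (0:ℝ) < (Nat.factorial (m 1) : ℝ) * (Nat.factorial n : ℝ) := by positivity
  rw [div_mul_eq_mul_div, div_le_iff₀ hpos]
  calc (Nat.factorial k : ℝ)^2 * ∏ j ∈ Finset.Icc 2 n, ((Nat.factorial j : ℝ) / 2) ^ (m j)
      ≤ ((s : ℝ) / (n : ℝ)) ^ (((s : ℝ) - 2) / 2) *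
        (∏ j ∈ Finset.Icc 2 n, ((j : ℝ) / (n : ℝ)) ^ ((((j : ℝ) - 2) * (m j : ℝ)) / 2)) *
        ((Nat.factorial (m 1) : ℝ) * (Nat.factorial n : ℝ)) := h
    _ = ((s : ℝ) / (n : ℝ)) ^ (((s : ℝ) - 2) / 2) *
        (∏ j ∈ Finset.Icc 2 n, ((j : ℝ) / (n : ℝ)) ^ ((((j : ℝ) - 2) * (m j : ℝ)) / 2)) *
        ((Nat.factorial (m 1) : ℝ) * (Nat.factorial n : ℝ)) := by ring
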